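/- For every positive integer m, the number of m-ary quasigroups of order 5 satisfies Q(m, 5) ≥ 2^{3^{m/3 − 0.072}}, where the right-hand side is a real number (with real exponentiation). -/

import Mathlib

/-- An `ι`-ary quasigroup: a function `f : (ι → S) → S` that is bijective in each
argument when the other arguments are fixed. -/
def IsMultiQuasigroup {ι S : Type*} [DecidableEq ι] (f : (ι → S) → S) : Prop :=
  ∀ (i : ι) (x : ι → S), Function.Bijective fun a => f (Function.update x i a)

namespace QGProof

abbrev Q5 := Fin 5

def swap01 : Q5 → Q5 := ![1, 0, 2, 3, 4]

lemma swap01_bij : Function.Bijective swap01 := by decide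
lemma swap01_fix : ∀ v : Q5, ¬(v = 0 ∨ v = 1) → swap01 v = v := by decide
lemma swap01_ne : ∀ v : Q5, (v = 0 ∨ v = 1) → swap01 v ≠ v := by decide

def IsSwapSet {ι : Type*} [DecidableEq ι] (f : (ι → Q5) → Q5) (A : Set (ι → Q5)) : Prop :=
  (∀ x ∈ A, f x = 0 ∨ f x = 1) ∧
  (∀ x ∈ A, ∀ (i : ι) (a : Q5), f (Function.update x i a) = swap01 (f x) →
      Function.update x i a ∈ A)

open Classical in
noncomputable def swapFn {ι : Type*} [DecidableEq ι] (f : (ι → Q5) → Q5)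
    (A : Set (ι → Q5)) : (ι → Q5) → Q5 :=
  fun x => if x ∈ A then swap01 (f x) else f x

lemma swapFn_quasi {ι : Type*} [DecidableEq ι] {f : (ι → Q5) → Q5} {A : Set (ι → Q5)}
    (hf : IsMultiQuasigroup f) (hA : IsSwapSet f A) : IsMultiQuasigroup (swapFn f A) := by
  intro i x
  set u : Q5 → Q5 := fun a => f (Function.update x i a) with hu_def
  have hu : Function.Bijective u := hf i x
  by_cases h : ∃ a, Function.update x i a ∈ A
  · obtain ⟨a0, ha0⟩ := h
    obtain ⟨a1, ha1⟩ := hu.2 (swap01 (u a0))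
    have hx1 : Function.update x i a1 ∈ A := by
      have h2 := hA.2 _ ha0 i a1 (by rw [Function.update_idem]; exact ha1)
      rwa [Function.update_idem] at h2
    have key : ∀ a, Function.update x i a ∈ A ↔ (u a = 0 ∨ u a = 1) := by
      intro a
      constructor
      · intro ha; exact hA.1 _ ha
      · intro hv
        have h0 : u a0 = 0 ∨ u a0 = 1 := hA.1 _ ha0
        have hpair : u a = u a0 ∨ u a = u a1 := by
          rcases h0 with h0 | h0 <;> rcases hv with hv | hv
          · exact Or.inl (by rw [hv, h0])
          · exact Or.inr (by rw [hv, ha1, h0]; decide)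
          · exact Or.inr (by rw [hv, ha1, h0]; decide)
          · exact Or.inl (by rw [hv, h0])
        rcases hpair with hp | hp
        · rw [hu.1 hp]; exact ha0
        · rw [hu.1 hp]; exact hx1
    have heq : (fun a => swapFn f A (Function.update x i a)) = fun a => swap01 (u a) := by
      funext a
      by_cases hm : Function.update x i a ∈ A
      · simp [swapFn, hm]; rfl
      · have hna : ¬(u a = 0 ∨ u a = 1) := fun hc => hm ((key a).2 hc)
        simp [swapFn, hm, swap01_fix _ hna]; rfl
    rw [heq]
    exact swap01_bij.comp hu
  · push_neg at h
    have heq : (fun a => swapFn f A (Function.update x i a)) = u := by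
      funext a; simp [swapFn, h a]; rfl
    rw [heq]; exact hu

lemma isSwapSet_union {ι : Type*} [DecidableEq ι] {f : (ι → Q5) → Q5} {n : ℕ}
    {A : Fin n → Set (ι → Q5)} (hA : ∀ j, IsSwapSet f (A j)) (S : Fin n → Bool) :
    IsSwapSet f {x | ∃ j, S j = true ∧ x ∈ A j} := by
  constructor
  · rintro x ⟨j, _, hx⟩; exact (hA j).1 x hx
  · rintro x ⟨j, hS, hx⟩ i a hfa
    exact ⟨j, hS, (hA j).2 x hx i a hfa⟩

lemma card_ge {ι : Type*} [DecidableEq ι] [Fintype ι] {f : (ι → Q5) → Q5}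
    (hf : IsMultiQuasigroup f) {n : ℕ} {A : Fin n → Set (ι → Q5)}
    (hA : ∀ j, IsSwapSet f (A j)) (hne : ∀ j, (A j).Nonempty)
    (hdisj : ∀ j k, j ≠ k → ∀ x, x ∈ A j → x ∉ A k) :
    2 ^ n ≤ Nat.card {g : (ι → Q5) → Q5 // IsMultiQuasigroup g} := by
  classical
  set F : (Fin n → Bool) → {g : (ι → Q5) → Q5 // IsMultiQuasigroup g} := fun S =>
    ⟨swapFn f {x | ∃ j, S j = true ∧ x ∈ A j},
      swapFn_quasi hf (isSwapSet_union hA S)⟩ with hF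
  have hinj : Function.Injective F := by
    intro S S' hSS
    funext j
    by_contra hj
    obtain ⟨x, hx⟩ := hne j
    have hval : F S = F S' := hSS
    have hval2 := congrArg (fun g => g.1 x) hval
    simp only [hF] at hval2
    have mem_iff : ∀ (Sb : Fin n → Bool),
        (x ∈ {y | ∃ k, Sb k = true ∧ y ∈ A k}) ↔ Sb j = true := by
      intro Sb
      constructor
      · rintro ⟨k, hk, hxk⟩
        rcases eq_or_ne k j with rfl | hkj
        · exact hk
        · exact absurd hx (hdisj k j hkj x hxk)
      · intro h; exact ⟨j, h, hx⟩
    have hf01 : f x = 0 ∨ f x = 1 := (hA j).1 x hx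
    have hswap := swap01_ne _ hf01
    rcases Bool.eq_false_or_eq_true (S j) with hSj | hSj <;>
      rcases Bool.eq_false_or_eq_true (S' j) with hSj' | hSj'
    · exact hj (hSj.trans hSj'.symm)
    · have m1 : (x ∈ {y | ∃ k, S k = true ∧ y ∈ A k}) := (mem_iff S).2 hSj
      have m2 : ¬ (x ∈ {y | ∃ k, S' k = true ∧ y ∈ A k}) := by
        rw [mem_iff]; simp [hSj']
      rw [swapFn, swapFn, if_pos m1, if_neg m2] at hval2
      exact hswap hval2
    · have m1 : ¬ (x ∈ {y | ∃ k, S k = true ∧ y ∈ A k}) := by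
        rw [mem_iff]; simp [hSj]
      have m2 : (x ∈ {y | ∃ k, S' k = true ∧ y ∈ A k}) := (mem_iff S').2 hSj'
      rw [swapFn, swapFn, if_neg m1, if_pos m2] at hval2
      exact hswap hval2.symm
    · exact hj (hSj.trans hSj'.symm)
  calc 2 ^ n = Nat.card (Fin n → Bool) := by
        simp [Nat.card_eq_fintype_card]
    _ ≤ _ := Nat.card_le_card_of_injective F hinj

def sqP : Q5 → Q5 → Q5 :=
  ![![0, 1, 3, 4, 2], ![1, 0, 4, 2, 3], ![3, 4, 2, 1, 0], ![4, 2, 0, 3, 1], ![2, 3, 1, 0, 4]]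

lemma sqP_left : ∀ y, Function.Bijective (fun x => sqP x y) := by decide
lemma sqP_right : ∀ x, Function.Bijective (sqP x) := by decide
lemma sqP_mem : ∀ u v : Q5, (u = 0 ∨ u = 1) → (v = 0 ∨ v = 1) →
    (sqP u v = 0 ∨ sqP u v = 1) := by decide
lemma sqP_swap_left : ∀ u v u' : Q5, (u = 0 ∨ u = 1) → (v = 0 ∨ v = 1) →
    sqP u' v = swap01 (sqP u v) → u' = swap01 u := by decide
lemma sqP_swap_right : ∀ u v v' : Q5, (u = 0 ∨ u = 1) → (v = 0 ∨ v = 1) →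
    sqP u v' = swap01 (sqP u v) → v' = swap01 v := by decide

variable {ι κ : Type*} [DecidableEq ι] [DecidableEq κ]

def comp2 (f : (ι → Q5) → Q5) (g : (κ → Q5) → Q5) : (ι ⊕ κ → Q5) → Q5 :=
  fun z => sqP (f (z ∘ Sum.inl)) (g (z ∘ Sum.inr))

lemma upd_inl_inl (z : ι ⊕ κ → Q5) (i : ι) (a : Q5) :
    (Function.update z (Sum.inl i) a) ∘ Sum.inl = Function.update (z ∘ Sum.inl) i a := by
  funext k
  simp [Function.update_apply, Function.comp, Sum.inl.injEq]

lemma upd_inl_inr (z : ι ⊕ κ → Q5) (i : ι) (a : Q5) :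
    (Function.update z (Sum.inl i) a) ∘ Sum.inr = z ∘ Sum.inr := by
  funext k
  simp [Function.update_apply, Function.comp]

lemma upd_inr_inr (z : ι ⊕ κ → Q5) (i : κ) (a : Q5) :
    (Function.update z (Sum.inr i) a) ∘ Sum.inr = Function.update (z ∘ Sum.inr) i a := by
  funext k
  simp [Function.update_apply, Function.comp, Sum.inr.injEq]

lemma upd_inr_inl (z : ι ⊕ κ → Q5) (i : κ) (a : Q5) :
    (Function.update z (Sum.inr i) a) ∘ Sum.inl = z ∘ Sum.inl := by
  funext k
  simp [Function.update_apply, Function.comp]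

lemma comp2_quasi {f : (ι → Q5) → Q5} {g : (κ → Q5) → Q5}
    (hf : IsMultiQuasigroup f) (hg : IsMultiQuasigroup g) :
    IsMultiQuasigroup (comp2 f g) := by
  intro i z
  cases i with
  | inl i =>
    have heq : (fun a => comp2 f g (Function.update z (Sum.inl i) a))
        = (fun v => sqP v (g (z ∘ Sum.inr))) ∘ (fun a => f (Function.update (z ∘ Sum.inl) i a)) := by
      funext a
      simp only [comp2, Function.comp_apply, Function.comp, upd_inl_inl, upd_inl_inr]
    rw [heq]
    exact (sqP_left _).comp (hf i _)
  | inr i =>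
    have heq : (fun a => comp2 f g (Function.update z (Sum.inr i) a))
        = (fun v => sqP (f (z ∘ Sum.inl)) v) ∘ (fun a => g (Function.update (z ∘ Sum.inr) i a)) := by
      funext a
      simp only [comp2, Function.comp_apply, Function.comp, upd_inr_inl, upd_inr_inr]
    rw [heq]
    exact (sqP_right _).comp (hg i _)

lemma comp2_swap {f : (ι → Q5) → Q5} {g : (κ → Q5) → Q5} {A : Set (ι → Q5)} {B : Set (κ → Q5)}
    (hA : IsSwapSet f A) (hB : IsSwapSet g B) :
    IsSwapSet (comp2 f g) {z | z ∘ Sum.inl ∈ A ∧ z ∘ Sum.inr ∈ B} := by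
  constructor
  · rintro z ⟨h1, h2⟩
    exact sqP_mem _ _ (hA.1 _ h1) (hB.1 _ h2)
  · rintro z ⟨h1, h2⟩ i a hv
    cases i with
    | inl i =>
      rw [comp2, comp2, upd_inl_inl, upd_inl_inr] at hv
      have hu' : f (Function.update (z ∘ Sum.inl) i a) = swap01 (f (z ∘ Sum.inl)) :=
        sqP_swap_left _ _ _ (hA.1 _ h1) (hB.1 _ h2) hv
      constructor
      · rw [upd_inl_inl]; exact hA.2 _ h1 i a hu'
      · rw [upd_inl_inr]; exact h2
    | inr i =>
      rw [comp2, comp2, upd_inr_inl, upd_inr_inr] at hv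
      have hv' : g (Function.update (z ∘ Sum.inr) i a) = swap01 (g (z ∘ Sum.inr)) :=
        sqP_swap_right _ _ _ (hA.1 _ h1) (hB.1 _ h2) hv
      constructor
      · rw [upd_inr_inl]; exact h1
      · rw [upd_inr_inr]; exact hB.2 _ h2 i a hv'

def reix (e : κ ≃ ι) (f : (ι → Q5) → Q5) : (κ → Q5) → Q5 := fun z => f (z ∘ e.symm)

lemma upd_equiv (e : κ ≃ ι) (x : κ → Q5) (i : κ) (a : Q5) :
    (Function.update x i a) ∘ e.symm = Function.update (x ∘ e.symm) (e i) a := by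
  funext w
  simp only [Function.update_apply, Function.comp_apply, Function.comp]
  by_cases h : w = e i
  · simp [h]
  · have h2 : e.symm w ≠ i := fun hc => h (by rw [← hc] at *; simp)
    simp [h, h2]

lemma reix_quasi {f : (ι → Q5) → Q5} (e : κ ≃ ι) (hf : IsMultiQuasigroup f) :
    IsMultiQuasigroup (reix e f) := by
  intro i x
  have heq : (fun a => reix e f (Function.update x i a))
      = fun a => f (Function.update (x ∘ e.symm) (e i) a) := by
    funext a; rw [reix, upd_equiv]
  rw [heq]
  exact hf (e i) (x ∘ e.symm)

lemma reix_swap {f : (ι → Q5) → Q5} {A : Set (ι → Q5)} (e : κ ≃ ι) (hA : IsSwapSet f A) :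
    IsSwapSet (reix e f) {z | z ∘ e.symm ∈ A} := by
  constructor
  · intro x hx; exact hA.1 _ hx
  · intro x hx i a hv
    rw [reix, upd_equiv] at hv
    show (Function.update x i a) ∘ e.symm ∈ A
    rw [upd_equiv]
    exact hA.2 _ hx (e i) a hv

structure Bundle (ι : Type) [DecidableEq ι] (n : ℕ) : Type where
  f : (ι → Q5) → Q5
  quasi : IsMultiQuasigroup f
  A : Fin n → Set (ι → Q5)
  swap : ∀ j, IsSwapSet f (A j)
  nonempty : ∀ j, (A j).Nonempty
  disj : ∀ j k, j ≠ k → ∀ x, x ∈ A j → x ∉ A k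

variable {ι κ : Type} [DecidableEq ι] [DecidableEq κ]

def Bundle.prod {n n' : ℕ} (b1 : Bundle ι n) (b2 : Bundle κ n') : Bundle (ι ⊕ κ) (n * n') where
  f := comp2 b1.f b2.f
  quasi := comp2_quasi b1.quasi b2.quasi
  A := fun j => {z | z ∘ Sum.inl ∈ b1.A (finProdFinEquiv.symm j).1 ∧
                     z ∘ Sum.inr ∈ b2.A (finProdFinEquiv.symm j).2}
  swap := fun j => comp2_swap (b1.swap _) (b2.swap _)
  nonempty := fun j => by
    obtain ⟨x, hx⟩ := b1.nonempty (finProdFinEquiv.symm j).1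
    obtain ⟨y, hy⟩ := b2.nonempty (finProdFinEquiv.symm j).2
    exact ⟨Sum.elim x y, by simpa using hx, by simpa using hy⟩
  disj := by
    intro j k hjk z hzj hzk
    have hne : finProdFinEquiv.symm j ≠ finProdFinEquiv.symm k :=
      fun hc => hjk (finProdFinEquiv.symm.injective hc)
    by_cases h1 : (finProdFinEquiv.symm j).1 = (finProdFinEquiv.symm k).1
    · have h2 : (finProdFinEquiv.symm j).2 ≠ (finProdFinEquiv.symm k).2 := by
        intro hc; exact hne (Prod.ext h1 hc)
      exact b2.disj _ _ h2 (z ∘ Sum.inr) hzj.2 hzk.2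
    · exact b1.disj _ _ h1 (z ∘ Sum.inl) hzj.1 hzk.1

def Bundle.reixVars {n : ℕ} (e : κ ≃ ι) (b : Bundle ι n) : Bundle κ n where
  f := reix e b.f
  quasi := reix_quasi e b.quasi
  A := fun j => {z | z ∘ e.symm ∈ b.A j}
  swap := fun j => reix_swap e (b.swap j)
  nonempty := fun j => by
    obtain ⟨x, hx⟩ := b.nonempty j
    refine ⟨x ∘ e, ?_⟩
    show (x ∘ e) ∘ e.symm ∈ b.A j
    have : (x ∘ e) ∘ e.symm = x := by
      funext w; simp
    rwa [this]
  disj := fun j k hjk z hzj hzk => b.disj j k hjk (z ∘ e.symm) hzj hzk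

def Bundle.reixBoxes {n n' : ℕ} (e : Fin n' ≃ Fin n) (b : Bundle ι n) : Bundle ι n' where
  f := b.f
  quasi := b.quasi
  A := fun j => b.A (e j)
  swap := fun j => b.swap (e j)
  nonempty := fun j => b.nonempty (e j)
  disj := fun j k hjk => b.disj (e j) (e k) (fun hc => hjk (e.injective hc))

def cubeT : Fin 5 → Fin 5 → Fin 5 → Fin 5 :=
  ![![![2, 4, 1, 3, 0], ![4, 0, 2, 1, 3], ![3, 1, 4, 0, 2], ![1, 3, 0, 2, 4], ![0, 2, 3, 4, 1]],
  ![![3, 2, 4, 0, 1], ![0, 4, 1, 3, 2], ![1, 3, 0, 2, 4], ![2, 1, 3, 4, 0], ![4, 0, 2, 1, 3]],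
  ![![4, 0, 3, 1, 2], ![1, 3, 0, 2, 4], ![0, 2, 1, 4, 3], ![3, 4, 2, 0, 1], ![2, 1, 4, 3, 0]],
  ![![1, 3, 0, 2, 4], ![2, 1, 3, 4, 0], ![4, 0, 2, 3, 1], ![0, 2, 4, 1, 3], ![3, 4, 1, 0, 2]],
  ![![0, 1, 2, 4, 3], ![3, 2, 4, 0, 1], ![2, 4, 3, 1, 0], ![4, 0, 1, 3, 2], ![1, 3, 0, 2, 4]]]

def labT : Fin 5 → Fin 5 → Fin 5 → Fin 4 :=
  ![![![3, 3, 2, 3, 2], ![3, 1, 3, 1, 3], ![3, 1, 3, 1, 3], ![2, 3, 2, 3, 3], ![2, 3, 3, 3, 2]],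
  ![![3, 3, 3, 2, 2], ![0, 3, 0, 3, 3], ![0, 3, 0, 3, 3], ![3, 2, 3, 3, 2], ![3, 2, 3, 2, 3]],
  ![![3, 2, 3, 2, 3], ![0, 3, 0, 3, 3], ![0, 3, 0, 3, 3], ![3, 3, 3, 2, 2], ![3, 2, 3, 3, 2]],
  ![![2, 3, 2, 3, 3], ![3, 1, 3, 3, 1], ![3, 1, 3, 3, 1], ![2, 3, 3, 2, 3], ![3, 3, 2, 2, 3]],
  ![![2, 2, 3, 3, 3], ![3, 3, 3, 1, 1], ![3, 3, 3, 1, 1], ![3, 2, 2, 3, 3], ![2, 3, 2, 3, 3]]]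

def sqB : Fin 5 → Fin 5 → Fin 5 :=
  ![![0, 3, 4, 2, 1], ![4, 1, 0, 3, 2], ![1, 2, 3, 0, 4], ![3, 4, 2, 1, 0], ![2, 0, 1, 4, 3]]

def labB : Fin 5 → Fin 5 → Fin 3 :=
  ![![0, 2, 2, 2, 0], ![2, 1, 1, 2, 2], ![0, 2, 2, 0, 2], ![2, 2, 2, 0, 0], ![2, 1, 1, 2, 2]]

lemma cubeT_lat1 : ∀ y z, Function.Bijective (fun x => cubeT x y z) := by decide
lemma cubeT_lat2 : ∀ x z, Function.Bijective (fun y => cubeT x y z) := by decide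
lemma cubeT_lat3 : ∀ x y, Function.Bijective (fun z => cubeT x y z) := by decide
lemma cubeT_val : ∀ (j : Fin 3) (a b c : Fin 5), labT a b c = j.castSucc →
    (cubeT a b c = 0 ∨ cubeT a b c = 1) := by decide
lemma cubeT_cl1 : ∀ (j : Fin 3) (a b c a' : Fin 5), labT a b c = j.castSucc →
    cubeT a' b c = swap01 (cubeT a b c) → labT a' b c = j.castSucc := by decide
lemma cubeT_cl2 : ∀ (j : Fin 3) (a b c b' : Fin 5), labT a b c = j.castSucc →
    cubeT a b' c = swap01 (cubeT a b c) → labT a b' c = j.castSucc := by decide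
lemma cubeT_cl3 : ∀ (j : Fin 3) (a b c c' : Fin 5), labT a b c = j.castSucc →
    cubeT a b c' = swap01 (cubeT a b c) → labT a b c' = j.castSucc := by decide

lemma sqB_lat1 : ∀ y, Function.Bijective (fun x => sqB x y) := by decide
lemma sqB_lat2 : ∀ x, Function.Bijective (fun y => sqB x y) := by decide
lemma sqB_val : ∀ (j : Fin 2) (a b : Fin 5), labB a b = j.castSucc →
    (sqB a b = 0 ∨ sqB a b = 1) := by decide
lemma sqB_cl1 : ∀ (j : Fin 2) (a b a' : Fin 5), labB a b = j.castSucc →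
    sqB a' b = swap01 (sqB a b) → labB a' b = j.castSucc := by decide
lemma sqB_cl2 : ∀ (j : Fin 2) (a b b' : Fin 5), labB a b = j.castSucc →
    sqB a b' = swap01 (sqB a b) → labB a b' = j.castSucc := by decide

def f3 : (Fin 3 → Q5) → Q5 := fun z => cubeT (z 0) (z 1) (z 2)
def f2 : (Fin 2 → Q5) → Q5 := fun z => sqB (z 0) (z 1)

lemma upd3 (x : Fin 3 → Q5) (i : Fin 3) (a : Q5) :
    f3 (Function.update x i a) =
      cubeT (Function.update x i a 0) (Function.update x i a 1) (Function.update x i a 2) := rfl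

def bundle3 : Bundle (Fin 3) 3 where
  f := f3
  quasi := by
    intro i x
    rcases (by omega : i = 0 ∨ i = 1 ∨ i = 2) with rfl | rfl | rfl
    · have heq : (fun a => f3 (Function.update x 0 a)) = fun a => cubeT a (x 1) (x 2) := by
        funext a
        rw [upd3, Function.update_self,
          Function.update_of_ne (by decide : (1 : Fin 3) ≠ 0),
          Function.update_of_ne (by decide : (2 : Fin 3) ≠ 0)]
      rw [heq]; exact cubeT_lat1 (x 1) (x 2)
    · have heq : (fun a => f3 (Function.update x 1 a)) = fun a => cubeT (x 0) a (x 2) := by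
        funext a
        rw [upd3, Function.update_self,
          Function.update_of_ne (by decide : (0 : Fin 3) ≠ 1),
          Function.update_of_ne (by decide : (2 : Fin 3) ≠ 1)]
      rw [heq]; exact cubeT_lat2 (x 0) (x 2)
    · have heq : (fun a => f3 (Function.update x 2 a)) = fun a => cubeT (x 0) (x 1) a := by
        funext a
        rw [upd3, Function.update_self,
          Function.update_of_ne (by decide : (0 : Fin 3) ≠ 2),
          Function.update_of_ne (by decide : (1 : Fin 3) ≠ 2)]
      rw [heq]; exact cubeT_lat3 (x 0) (x 1)
  A := fun j => {z | labT (z 0) (z 1) (z 2) = j.castSucc}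
  swap := by
    intro j
    constructor
    · intro x hx; exact cubeT_val j _ _ _ hx
    · intro x hx i a hv
      rcases (by omega : i = 0 ∨ i = 1 ∨ i = 2) with rfl | rfl | rfl
      · show labT (Function.update x 0 a 0) (Function.update x 0 a 1) (Function.update x 0 a 2)
            = j.castSucc
        rw [Function.update_self,
          Function.update_of_ne (by decide : (1 : Fin 3) ≠ 0),
          Function.update_of_ne (by decide : (2 : Fin 3) ≠ 0)]
        apply cubeT_cl1 j _ _ _ _ hx
        rw [upd3, Function.update_self,
          Function.update_of_ne (by decide : (1 : Fin 3) ≠ 0),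
          Function.update_of_ne (by decide : (2 : Fin 3) ≠ 0)] at hv
        exact hv
      · show labT (Function.update x 1 a 0) (Function.update x 1 a 1) (Function.update x 1 a 2)
            = j.castSucc
        rw [Function.update_self,
          Function.update_of_ne (by decide : (0 : Fin 3) ≠ 1),
          Function.update_of_ne (by decide : (2 : Fin 3) ≠ 1)]
        apply cubeT_cl2 j _ _ _ _ hx
        rw [upd3, Function.update_self,
          Function.update_of_ne (by decide : (0 : Fin 3) ≠ 1),
          Function.update_of_ne (by decide : (2 : Fin 3) ≠ 1)] at hv
        exact hv
      · show labT (Function.update x 2 a 0) (Function.update x 2 a 1) (Function.update x 2 a 2)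
            = j.castSucc
        rw [Function.update_self,
          Function.update_of_ne (by decide : (0 : Fin 3) ≠ 2),
          Function.update_of_ne (by decide : (1 : Fin 3) ≠ 2)]
        apply cubeT_cl3 j _ _ _ _ hx
        rw [upd3, Function.update_self,
          Function.update_of_ne (by decide : (0 : Fin 3) ≠ 2),
          Function.update_of_ne (by decide : (1 : Fin 3) ≠ 2)] at hv
        exact hv
  nonempty := by
    intro j
    rcases (by omega : j = 0 ∨ j = 1 ∨ j = 2) with rfl | rfl | rfl
    · exact ⟨![1, 1, 0], by show labT 1 1 0 = (0 : Fin 3).castSucc; decide⟩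
    · exact ⟨![0, 1, 1], by show labT 0 1 1 = (1 : Fin 3).castSucc; decide⟩
    · exact ⟨![0, 0, 2], by show labT 0 0 2 = (2 : Fin 3).castSucc; decide⟩
  disj := by
    intro j k hjk x hxj hxk
    exact hjk (Fin.castSucc_inj.mp ((hxj.symm.trans hxk)))

lemma upd2 (x : Fin 2 → Q5) (i : Fin 2) (a : Q5) :
    f2 (Function.update x i a) =
      sqB (Function.update x i a 0) (Function.update x i a 1) := rfl

def bundle2 : Bundle (Fin 2) 2 where
  f := f2
  quasi := by
    intro i x
    rcases (by omega : i = 0 ∨ i = 1) with rfl | rfl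
    · have heq : (fun a => f2 (Function.update x 0 a)) = fun a => sqB a (x 1) := by
        funext a
        rw [upd2, Function.update_self, Function.update_of_ne (by decide : (1 : Fin 2) ≠ 0)]
      rw [heq]; exact sqB_lat1 (x 1)
    · have heq : (fun a => f2 (Function.update x 1 a)) = fun a => sqB (x 0) a := by
        funext a
        rw [upd2, Function.update_self, Function.update_of_ne (by decide : (0 : Fin 2) ≠ 1)]
      rw [heq]; exact sqB_lat2 (x 0)
  A := fun j => {z | labB (z 0) (z 1) = j.castSucc}
  swap := by
    intro j
    constructor
    · intro x hx; exact sqB_val j _ _ hx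
    · intro x hx i a hv
      rcases (by omega : i = 0 ∨ i = 1) with rfl | rfl
      · show labB (Function.update x 0 a 0) (Function.update x 0 a 1) = j.castSucc
        rw [Function.update_self, Function.update_of_ne (by decide : (1 : Fin 2) ≠ 0)]
        apply sqB_cl1 j _ _ _ hx
        rw [upd2, Function.update_self,
          Function.update_of_ne (by decide : (1 : Fin 2) ≠ 0)] at hv
        exact hv
      · show labB (Function.update x 1 a 0) (Function.update x 1 a 1) = j.castSucc
        rw [Function.update_self, Function.update_of_ne (by decide : (0 : Fin 2) ≠ 1)]
        apply sqB_cl2 j _ _ _ hx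
        rw [upd2, Function.update_self,
          Function.update_of_ne (by decide : (0 : Fin 2) ≠ 1)] at hv
        exact hv
  nonempty := by
    intro j
    rcases (by omega : j = 0 ∨ j = 1) with rfl | rfl
    · exact ⟨![0, 0], by show labB 0 0 = (0 : Fin 2).castSucc; decide⟩
    · exact ⟨![1, 1], by show labB 1 1 = (1 : Fin 2).castSucc; decide⟩
  disj := by
    intro j k hjk x hxj hxk
    exact hjk (Fin.castSucc_inj.mp ((hxj.symm.trans hxk)))

def bundle4 : Bundle (Fin 4) 4 :=
  ((bundle2.prod bundle2).reixVars
      ((finCongr (by norm_num : 4 = 2 + 2)).trans finSumFinEquiv.symm)).reixBoxes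
    (finCongr (by norm_num : 4 = 2 * 2))

def bundleIter (b0 n0 : ℕ) (base : Bundle (Fin b0) n0) :
    ∀ k : ℕ, Bundle (Fin (3*k + b0)) (3^k * n0)
  | 0 => (base.reixVars (finCongr (by omega))).reixBoxes (finCongr (by norm_num))
  | (k+1) =>
      (((bundle3.prod (bundleIter b0 n0 base k)).reixVars
        ((finCongr (by omega : 3*(k+1)+b0 = 3+(3*k+b0))).trans finSumFinEquiv.symm)).reixBoxes
        (finCongr (by ring : 3^(k+1)*n0 = 3*(3^k*n0))))

lemma card_ge_of_bundle {m n : ℕ} (b : Bundle (Fin m) n) :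
    2 ^ n ≤ Nat.card {g : (Fin m → Fin 5) → Fin 5 // IsMultiQuasigroup g} :=
  card_ge b.quasi b.swap b.nonempty b.disj

lemma rpow_le_of_pow_le {p q : ℕ} {c : ℝ} (hq : q ≠ 0) (hc : 0 ≤ c)
    (h : (3:ℝ)^p ≤ c^q) : (3:ℝ) ^ ((p:ℝ)/(q:ℝ)) ≤ c := by
  have h3 : (0:ℝ) ≤ 3 := by norm_num
  have hq' : ((q:ℝ)) ≠ 0 := by exact_mod_cast hq
  have key : ((3:ℝ) ^ ((p:ℝ)/(q:ℝ))) ^ q = (3:ℝ)^p := by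
    rw [← Real.rpow_natCast ((3:ℝ)^((p:ℝ)/(q:ℝ))) q, ← Real.rpow_mul h3,
      div_mul_cancel₀ _ hq', Real.rpow_natCast]
  apply le_of_pow_le_pow_left₀ hq hc
  rw [key]; exact h

lemma key_a : (3:ℝ) ^ ((98:ℝ)/375) ≤ 2 := by
  apply rpow_le_of_pow_le (by norm_num) (by norm_num)
  exact_mod_cast (by decide : (3:ℕ)^98 ≤ 2^375)

lemma key_b : (3:ℝ) ^ ((223:ℝ)/375) ≤ 2 := by
  apply rpow_le_of_pow_le (by norm_num) (by norm_num)
  exact_mod_cast (by decide : (3:ℕ)^223 ≤ 2^375)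

lemma key_c : (3:ℝ) ^ ((473:ℝ)/375) ≤ 4 := by
  apply rpow_le_of_pow_le (by norm_num) (by norm_num)
  exact_mod_cast (by decide : (3:ℕ)^473 ≤ 4^375)

lemma final_step {m n : ℕ}
    (hcard : 2 ^ n ≤ Nat.card {f : (Fin m → Fin 5) → Fin 5 // IsMultiQuasigroup f})
    (hexp : (3:ℝ) ^ ((m:ℝ)/3 - 0.072) ≤ (n:ℝ)) :
    (2:ℝ) ^ ((3:ℝ) ^ ((m:ℝ)/3 - 0.072)) ≤
      (Nat.card {f : (Fin m → Fin 5) → Fin 5 // IsMultiQuasigroup f} : ℝ) := by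
  have h1 : (2:ℝ) ^ ((3:ℝ) ^ ((m:ℝ)/3 - 0.072)) ≤ (2:ℝ) ^ ((n:ℕ):ℝ) :=
    Real.rpow_le_rpow_of_exponent_le (by norm_num) hexp
  rw [Real.rpow_natCast] at h1
  refine h1.trans ?_
  calc (2:ℝ)^n = ((2^n : ℕ) : ℝ) := by push_cast; ring
    _ ≤ _ := by exact_mod_cast hcard

lemma hexp_step {m k c : ℕ} {r : ℝ} (hm : (m:ℝ) = 3*(k:ℝ) + 3*r)
    (hkey : (3:ℝ) ^ (r - 0.072) ≤ (c:ℝ)) :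
    (3:ℝ) ^ ((m:ℝ)/3 - 0.072) ≤ ((3^k*c : ℕ):ℝ) := by
  have e1 : (m:ℝ)/3 - 0.072 = (k:ℝ) + (r - 0.072) := by rw [hm]; ring
  rw [e1, Real.rpow_add (by norm_num : (0:ℝ) < 3)]
  have h2 : (3:ℝ) ^ ((k:ℕ):ℝ) = ((3^k : ℕ):ℝ) := by
    rw [Real.rpow_natCast]; push_cast; ring
  rw [h2]
  calc ((3^k : ℕ):ℝ) * (3:ℝ)^(r - 0.072) ≤ ((3^k : ℕ):ℝ) * (c:ℝ) := by
        apply mul_le_mul_of_nonneg_left hkey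
        positivity
    _ = ((3^k*c : ℕ):ℝ) := by push_cast; ring

lemma card_m1 : 5 ≤ Nat.card {f : (Fin 1 → Fin 5) → Fin 5 // IsMultiQuasigroup f} := by
  have quasi : ∀ c : Fin 5, IsMultiQuasigroup (fun z : Fin 1 → Fin 5 => z 0 + c) := by
    intro c i x
    have hi : i = 0 := Subsingleton.elim _ _
    subst hi
    have heq : (fun a => (fun z : Fin 1 → Fin 5 => z 0 + c) (Function.update x 0 a))
        = fun a => a + c := by
      funext a
      show (Function.update x 0 a) 0 + c = a + c
      rw [Function.update_self]
    rw [heq]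
    exact (Equiv.addRight c).bijective
  have hinj : Function.Injective (fun c : Fin 5 =>
      (⟨fun z => z 0 + c, quasi c⟩ : {f : (Fin 1 → Fin 5) → Fin 5 // IsMultiQuasigroup f})) := by
    intro c c' h
    have h2 := congrArg (fun g : {f : (Fin 1 → Fin 5) → Fin 5 // IsMultiQuasigroup f} =>
      g.1 (fun _ => 0)) h
    simpa using h2
  calc 5 = Nat.card (Fin 5) := by simp
    _ ≤ _ := Nat.card_le_card_of_injective _ hinj

end QGProof


/-- The number of m-ary quasigroups of order 5 is at least 2 ^ (3 ^ (m/3 - 0.072)),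
with real exponentiation. -/
theorem stmt_10 (m : ℕ) (hm : 1 ≤ m) :
    (2 : ℝ) ^ ((3 : ℝ) ^ ((m : ℝ) / 3 - 0.072)) ≤
      (Nat.card {f : (Fin m → Fin 5) → Fin 5 // IsMultiQuasigroup f} : ℝ) := by

  rcases Nat.lt_or_ge m 2 with h1 | h2
  · have hm1 : m = 1 := by omega
    subst hm1
    apply QGProof.final_step (n := 2)
    · calc (2:ℕ)^2 ≤ 5 := by norm_num
        _ ≤ _ := QGProof.card_m1
    · have e1 : ((1:ℕ):ℝ)/3 - 0.072 = (98:ℝ)/375 := by norm_num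
      rw [e1]
      calc (3:ℝ) ^ ((98:ℝ)/375) ≤ 2 := QGProof.key_a
        _ = ((2:ℕ):ℝ) := by norm_num
  · rcases (by omega : m % 3 = 0 ∨ m % 3 = 1 ∨ m % 3 = 2) with h | h | h
    · obtain ⟨k, rfl⟩ : ∃ k, m = 3*k+3 := ⟨m/3 - 1, by omega⟩
      apply QGProof.final_step
        (QGProof.card_ge_of_bundle (QGProof.bundleIter 3 3 QGProof.bundle3 k))
      apply QGProof.hexp_step (r := 1)
      · push_cast; ring
      · calc (3:ℝ) ^ ((1:ℝ) - 0.072) ≤ 3^(1:ℝ) := by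
              apply Real.rpow_le_rpow_of_exponent_le (by norm_num) (by norm_num)
          _ = ((3:ℕ):ℝ) := by rw [Real.rpow_one]; norm_num
    · obtain ⟨k, rfl⟩ : ∃ k, m = 3*k+4 := ⟨(m-4)/3, by omega⟩
      apply QGProof.final_step
        (QGProof.card_ge_of_bundle (QGProof.bundleIter 4 4 QGProof.bundle4 k))
      apply QGProof.hexp_step (r := (4:ℝ)/3)
      · push_cast; ring
      · have e2 : (4:ℝ)/3 - 0.072 = (473:ℝ)/375 := by norm_num
        rw [e2]
        calc (3:ℝ) ^ ((473:ℝ)/375) ≤ 4 := QGProof.key_c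
          _ = ((4:ℕ):ℝ) := by norm_num
    · obtain ⟨k, rfl⟩ : ∃ k, m = 3*k+2 := ⟨m/3, by omega⟩
      apply QGProof.final_step
        (QGProof.card_ge_of_bundle (QGProof.bundleIter 2 2 QGProof.bundle2 k))
      apply QGProof.hexp_step (r := (2:ℝ)/3)
      · push_cast; ring
      · have e2 : (2:ℝ)/3 - 0.072 = (223:ℝ)/375 := by norm_num
        rw [e2]
        calc (3:ℝ) ^ ((223:ℝ)/375) ≤ 2 := QGProof.key_b
          _ = ((2:ℕ):ℝ) := by norm_num
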